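/- In the 'FORCER' gadget with 'fast' states q_{1,0}, …, q_{2n+3,0} connected by a-transitions (δ(q_{k,0}, a) = q_{k+1,0}) and 'delay' states reached by b-transitions (δ(q_{k,0}, b) = q_{k+1,2}, with δ(q_{k,2}, a) = δ(q_{k,2}, b) building a detour of extra length 2 before rejoining the fast track), the following holds: if q_{1,0} is active and the entire gadget must be deactivated (all activity pushed out through q_{2n+3,0}'s exit) within 2n + 3 steps, then the applied word must begin with a^{2n+2}; any occurrence of b among the first 2n + 2 letters makes deactivation within 2n + 3 steps impossible. -/

import Mathlib

/-- The binary alphabet `{a, b}`. -/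
inductive Letter | a | b
deriving DecidableEq, Inhabited

open Letter

/-- States of the `FORCER` gadget: `Sum.inl (k, j)` is the state `q_{k,j}`
(fast states are `q_{k,0}`, `1 ≤ k ≤ 2n+3`; detour states have `j ∈ {1, 2}`),
and `Sum.inr ()` is the exit (outside the gadget). -/
def ForcerState : Type := (ℕ × ℕ) ⊕ Unit

/-- Transitions of the `FORCER` gadget: `δ(q_{k,0}, a) = q_{k+1,0}`,
`δ(q_{k,0}, b) = q_{k+1,2}` for `k < 2n+3`, the fast state `q_{2n+3,0}` exits,
and each detour state `q_{k,2}` needs two further steps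
(`q_{k,2} → q_{k,1} → q_{k,0}`, under both letters) to rejoin the fast track. -/
def forcerδ (n : ℕ) : ForcerState → Letter → ForcerState
  | Sum.inl (k, 0), a => if k < 2 * n + 3 then Sum.inl (k + 1, 0) else Sum.inr ()
  | Sum.inl (k, 0), b => if k < 2 * n + 3 then Sum.inl (k + 1, 2) else Sum.inr ()
  | Sum.inl (k, 2), _ => Sum.inl (k, 1)
  | Sum.inl (k, 1), _ => Sum.inl (k, 0)
  | Sum.inl p, _ => Sum.inl p
  | Sum.inr u, _ => Sum.inr u

/-- Extension of the transition function to words. -/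
def run {Q X : Type*} (δ : Q → X → Q) (q : Q) (w : List X) : Q := w.foldl δ q

/-- Potential: minimum number of steps needed to reach the exit. -/
def forcerφ (n : ℕ) : ForcerState → ℕ
  | Sum.inl (k, j) => (2 * n + 3 - k) + j + 1
  | Sum.inr _ => 0

lemma forcerφ_inl (n k j : ℕ) : forcerφ n (Sum.inl (k, j)) = 2 * n + 3 - k + j + 1 := rfl

lemma forcerφ_inr (n : ℕ) (u : Unit) : forcerφ n (Sum.inr u) = 0 := rfl

lemma forcerδ_0a (n k : ℕ) : forcerδ n (Sum.inl (k, 0)) a =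
    if k < 2 * n + 3 then Sum.inl (k + 1, 0) else Sum.inr () := rfl

lemma forcerδ_0b (n k : ℕ) : forcerδ n (Sum.inl (k, 0)) b =
    if k < 2 * n + 3 then Sum.inl (k + 1, 2) else Sum.inr () := rfl

lemma forcerδ_1 (n k : ℕ) (x : Letter) : forcerδ n (Sum.inl (k, 0 + 1)) x = Sum.inl (k, 0) := by
  cases x <;> rfl

lemma forcerδ_2 (n k : ℕ) (x : Letter) : forcerδ n (Sum.inl (k, 0 + 1 + 1)) x = Sum.inl (k, 1) := by
  cases x <;> rfl

lemma forcerδ_3 (n k j : ℕ) (x : Letter) :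
    forcerδ n (Sum.inl (k, j + 1 + 1 + 1)) x = Sum.inl (k, j + 1 + 1 + 1) := by
  cases x <;> rfl

lemma forcerφ_step (n : ℕ) (q : ForcerState) (x : Letter) :
    forcerφ n q ≤ forcerφ n (forcerδ n q x) + 1 := by
  rcases q with ⟨k, j⟩ | u
  · rcases j with _ | _ | _ | j <;> rcases x <;>
      simp only [forcerδ_0a, forcerδ_0b, forcerδ_1, forcerδ_2, forcerδ_3] <;> (try split_ifs) <;> simp only [forcerφ_inl, forcerφ_inr] <;> omega
  · rw [forcerφ_inr]; omega

lemma forcer_exit_len (n : ℕ) : ∀ (w : List Letter) (q : ForcerState),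
    run (forcerδ n) q w = Sum.inr () → forcerφ n q ≤ w.length := by
  intro w
  induction w with
  | nil => intro q h; simp only [run, List.foldl_nil] at h; subst h; simp [forcerφ]
  | cons x w ih =>
      intro q h
      have h' : run (forcerδ n) (forcerδ n q x) w = Sum.inr () := h
      have := ih _ h'
      have := forcerφ_step n q x
      simp only [List.length_cons]
      omega

lemma forcer_fast (n : ℕ) (w : List Letter) (hlen : w.length = 2 * n + 3) :
    ∀ i ≤ 2 * n + 2, (∀ j < i, w[j]! = a) →
      run (forcerδ n) (Sum.inl (1, 0)) (w.take i) = Sum.inl (i + 1, 0) := by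
  intro i
  induction i with
  | zero => intro _ _; simp [run]; rfl
  | succ i ih =>
      intro hi ha
      have hil : i < w.length := by omega
      have htake : w.take (i + 1) = w.take i ++ [w[i]] := by
        rw [← List.take_concat_get hil, List.concat_eq_append]
      have hrun := ih (by omega) (fun j hj => ha j (by omega))
      have hwa : w[i] = a := by
        have := ha i (by omega)
        rwa [getElem!_pos w i hil] at this
      rw [htake]
      simp only [run, List.foldl_append] at *
      erw [List.foldl_append, hrun]
      simp only [List.foldl_cons, List.foldl_nil, hwa]
      exact if_pos (by omega)

/-- If `q_{1,0}` is active and its activity must leave the `FORCER` gadget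
through the exit within `2n + 3` steps, then the applied word begins with
`a^{2n+2}`: any occurrence of `b` among the first `2n + 2` letters makes this
impossible. -/
theorem forcer_forces (n : ℕ) (w : List Letter) (hlen : w.length = 2 * n + 3)
    (hout : run (forcerδ n) (Sum.inl (1, 0)) w = Sum.inr ()) :
    ∀ i < 2 * n + 2, w[i]! = a := by
  suffices H : ∀ i, i < 2 * n + 2 → (∀ j < i, w[j]! = a) → w[i]! = a by
    intro i hi
    induction i using Nat.strong_induction_on with
    | _ i ih => exact H i hi (fun j hj => ih j hj (by omega))
  intro i hi ha
  have hil : i < w.length := by omega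
  have hrun := forcer_fast n w hlen i (by omega) ha
  -- split w
  have hsplit : w = w.take i ++ w[i] :: w.drop (i + 1) := by
    conv_lhs => rw [← List.take_append_drop i w]
    congr 1
    exact (List.getElem_cons_drop hil).symm
  rw [getElem!_pos w i hil]
  by_contra hb
  have hwb : w[i] = b := by
    cases h : w[i]
    · exact absurd h hb
    · rfl
  have hout' : run (forcerδ n) (Sum.inl (i + 2, 2)) (w.drop (i + 1)) = Sum.inr () := by
    rw [hsplit] at hout
    simp only [run, List.foldl_append, List.foldl_cons] at hout ⊢
    erw [List.foldl_append] at hout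
    erw [show (w.take i).foldl (forcerδ n) (Sum.inl (1,0)) = Sum.inl (i+1, 0) from hrun,
      hwb] at hout
    erw [List.foldl_cons, forcerδ_0b, if_pos (show i + 1 < 2 * n + 3 by omega)] at hout
    exact hout
  have hlen' := forcer_exit_len n _ _ hout'
  have : (w.drop (i + 1)).length = 2 * n + 2 - i := by simp [hlen]
  rw [this] at hlen'
  simp only [forcerφ] at hlen'
  omega
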